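/- If every 2×2 subgame of a strict two-player zero-sum finite game has a pure Nash equilibrium (within that subgame), then the game is dominance-solvable. -/
import Mathlib


/-- Profiles differing only in player 1's strategy. -/
def IComp1 {A B : Type*} (p q : A × B) : Prop := p.1 ≠ q.1 ∧ p.2 = q.2

/-- Profiles differing only in player 2's strategy. -/
def IComp2 {A B : Type*} (p q : A × B) : Prop := p.1 = q.1 ∧ p.2 ≠ q.2

/-- A two-player game is strict if comparable profiles never give the deviating player
equal payoff. -/
def Strict2 {A B : Type*} (u1 u2 : A × B → ℝ) : Prop :=
  (∀ p q, IComp1 p q → u1 p ≠ u1 q) ∧ (∀ p q, IComp2 p q → u2 p ≠ u2 q)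

/-- Arc of the preference graph of a two-player game. -/
def Arc2 {A B : Type*} (u1 u2 : A × B → ℝ) (p q : A × B) : Prop :=
  (IComp1 p q ∧ u1 p < u1 q) ∨ (IComp2 p q ∧ u2 p < u2 q)

/-- A two-player game is zero-sum if the utilities sum to zero at every profile. -/
def ZeroSum2 {A B : Type*} (u1 u2 : A × B → ℝ) : Prop := ∀ p, u1 p + u2 p = 0

/-- `p` is a pure Nash equilibrium of the 2×2 subgame on strategies `{a, b}` for
player 1 and `{c, d}` for player 2. -/
def IsSubgamePNE2x2 {A B : Type*} (u1 u2 : A × B → ℝ) (a b : A) (c d : B)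
    (p : A × B) : Prop :=
  (p.1 = a ∨ p.1 = b) ∧ (p.2 = c ∨ p.2 = d) ∧
    ∀ q : A × B, (q.1 = a ∨ q.1 = b) → (q.2 = c ∨ q.2 = d) →
      (IComp1 p q → u1 q ≤ u1 p) ∧ (IComp2 p q → u2 q ≤ u2 p)

/-- One step of iterated deletion: from the subgame `T` delete a single strategy of one
player that is strictly dominated within `T`, obtaining the subgame `T'`. -/
def DeletionStep {A B : Type*} [DecidableEq A] [DecidableEq B] (u1 u2 : A × B → ℝ)
    (T T' : Finset A × Finset B) : Prop :=
  (∃ t ∈ T.1, (∃ s ∈ T.1, ∀ r ∈ T.2, u1 (t, r) < u1 (s, r)) ∧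
      T'.1 = T.1.erase t ∧ T'.2 = T.2) ∨
  (∃ t ∈ T.2, (∃ s ∈ T.2, ∀ r ∈ T.1, u2 (r, t) < u2 (r, s)) ∧
      T'.1 = T.1 ∧ T'.2 = T.2.erase t)

/-- A two-player finite game is dominance-solvable if some finite sequence of single
deletions of strictly dominated strategies, starting from the full game, ends in a
subgame with exactly one profile. -/
def DominanceSolvable {A B : Type*} [Fintype A] [Fintype B] [DecidableEq A] [DecidableEq B]
    (u1 u2 : A × B → ℝ) : Prop :=
  ∃ T : Finset A × Finset B,
    Relation.ReflTransGen (DeletionStep u1 u2) (Finset.univ, Finset.univ) T ∧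
      T.1.card = 1 ∧ T.2.card = 1

section ShapleyAux

variable {A B : Type*} [DecidableEq A] [DecidableEq B]

/-- The "no 2×2 cycle" lemma: in a 2×2 subgame where `(a,c)` is a strict double max
(in its row for u1-column-comparisons and so on) and `(r,d)` is a strict double max,
there is no PNE, contradicting the hypothesis. -/
lemma CL_lemma (u1 u2 : A × B → ℝ) (hz : ZeroSum2 u1 u2)
    (h2x2 : ∀ a b : A, ∀ c d : B, a ≠ b → c ≠ d →
      ∃ p : A × B, IsSubgamePNE2x2 u1 u2 a b c d p)
    {a r : A} {c d : B} (har : a ≠ r) (hcd : c ≠ d)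
    (h1 : u1 (r, c) < u1 (r, d)) (h2 : u1 (a, d) < u1 (r, d))
    (h3 : u1 (r, c) < u1 (a, c)) (h4 : u1 (a, d) < u1 (a, c)) : False := by
  obtain ⟨p, hp1, hp2, hp3⟩ := h2x2 a r c d har hcd
  obtain ⟨x, y⟩ := p
  simp only [] at hp1 hp2
  rcases hp1 with h | h <;> rcases hp2 with h' | h' <;> subst h <;> subst h'
  · -- p = (a, c): deviation to (a, d) for player 2
    have := (hp3 (x, d) (Or.inl rfl) (Or.inr rfl)).2 ⟨rfl, hcd⟩
    have hza := hz (x, y); have hzb := hz (x, d)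
    linarith
  · -- p = (a, d): deviation to (r, d) for player 1
    have := (hp3 (r, y) (Or.inr rfl) (Or.inr rfl)).1 ⟨har, rfl⟩
    linarith
  · -- p = (r, c): deviation to (a, c) for player 1
    have := (hp3 (a, y) (Or.inl rfl) (Or.inl rfl)).1 ⟨Ne.symm har, rfl⟩
    linarith
  · -- p = (r, d): deviation to (r, c) for player 2
    have := (hp3 (x, c) (Or.inr rfl) (Or.inl rfl)).2 ⟨rfl, Ne.symm hcd⟩
    have hza := hz (x, y); have hzb := hz (x, c)
    linarith

lemma claimC (u1 u2 : A × B → ℝ) (hz : ZeroSum2 u1 u2) (hs : Strict2 u1 u2)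
    (h2x2 : ∀ a b : A, ∀ c d : B, a ≠ b → c ≠ d →
      ∃ p : A × B, IsSubgamePNE2x2 u1 u2 a b c d p) :
    ∀ n : ℕ, ∀ T1 : Finset A, ∀ T2 : Finset B, T1.card + T2.card ≤ n →
      2 ≤ T1.card → 2 ≤ T2.card → ∀ a ∈ T1, ∀ c ∈ T2,
      (∀ r ∈ T1, ∀ d ∈ T2, u1 (r, d) ≤ u1 (a, c)) →
      (∃ b ∈ T1, b ≠ a ∧ ∀ e ∈ T2, u1 (b, e) < u1 (a, e)) ∨
      (∃ d ∈ T2, d ≠ c ∧ ∀ r ∈ T1, u1 (r, d) < u1 (r, c)) := by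
  have hstrict1 : ∀ {b b' : A} {e : B}, b ≠ b' → u1 (b, e) ≠ u1 (b', e) :=
    fun h => hs.1 _ _ ⟨h, rfl⟩
  have hstrict2 : ∀ {b : A} {e e' : B}, e ≠ e' → u1 (b, e) ≠ u1 (b, e') := by
    intro b e e' h heq
    have h2 := hs.2 (b, e) (b, e') ⟨rfl, h⟩
    have hza := hz (b, e); have hzb := hz (b, e')
    apply h2; linarith
  intro n
  induction n with
  | zero => intro T1 T2 hcard hT1 hT2; omega
  | succ n ih =>
    intro T1 T2 hcard hT1 hT2 a ha c hc hmax
    by_contra hcon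
    push_neg at hcon
    obtain ⟨hA, hB⟩ := hcon
    -- strict max facts
    have maxRow : ∀ b ∈ T1, b ≠ a → u1 (b, c) < u1 (a, c) := fun b hb hba =>
      lt_of_le_of_ne (hmax b hb c hc) (hstrict1 hba)
    have maxCol : ∀ d ∈ T2, d ≠ c → u1 (a, d) < u1 (a, c) := fun d hd hdc =>
      lt_of_le_of_ne (hmax a ha d hd) (hstrict2 hdc)
    -- upgraded failure hypotheses
    have hA' : ∀ b ∈ T1, b ≠ a → ∃ e ∈ T2, e ≠ c ∧ u1 (a, e) < u1 (b, e) := by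
      intro b hb hba
      obtain ⟨e, he, hle⟩ := hA b hb hba
      have hne : u1 (a, e) ≠ u1 (b, e) := hstrict1 (Ne.symm hba)
      have hlt : u1 (a, e) < u1 (b, e) := lt_of_le_of_ne hle hne
      refine ⟨e, he, ?_, hlt⟩
      rintro rfl
      exact absurd hlt (not_lt.mpr (le_of_lt (maxRow b hb hba)))
    have hB' : ∀ d ∈ T2, d ≠ c → ∃ r ∈ T1, r ≠ a ∧ u1 (r, c) < u1 (r, d) := by
      intro d hd hdc
      obtain ⟨r, hr, hle⟩ := hB d hd hdc
      have hlt : u1 (r, c) < u1 (r, d) := lt_of_le_of_ne hle (hstrict2 (Ne.symm hdc))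
      refine ⟨r, hr, ?_, hlt⟩
      rintro rfl
      exact absurd hlt (not_lt.mpr (le_of_lt (maxCol d hd hdc)))
    -- specialized cycle lemma
    have CL' : ∀ b ∈ T1, b ≠ a → ∀ e ∈ T2, e ≠ c →
        u1 (a, e) < u1 (b, e) → u1 (b, c) < u1 (b, e) → False := by
      intro b hb hba e he hec hs2 hs1
      exact CL_lemma u1 u2 hz h2x2 (Ne.symm hba) (Ne.symm hec) hs1 hs2
        (maxRow b hb hba) (maxCol e he hec)
    by_cases hT1c : T1.card = 2
    · -- two rows
      obtain ⟨x, y, hxy, hT1eq⟩ := Finset.card_eq_two.mp hT1c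
      have hmem : ∀ r ∈ T1, r = x ∨ r = y := by
        intro r hr; rw [hT1eq] at hr; simpa using hr
      have hb : ∃ b ∈ T1, b ≠ a ∧ ∀ r ∈ T1, r ≠ a → r = b := by
        rcases hmem a ha with rfl | rfl
        · refine ⟨y, by rw [hT1eq]; simp, Ne.symm hxy, ?_⟩
          intro r hr hra; rcases hmem r hr with rfl | rfl
          · exact absurd rfl hra
          · rfl
        · refine ⟨x, by rw [hT1eq]; simp, hxy, ?_⟩
          intro r hr hra; rcases hmem r hr with rfl | rfl
          · rfl
          · exact absurd rfl hra
      obtain ⟨b, hbT, hba, huniq⟩ := hb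
      obtain ⟨e, he, hec, hlt⟩ := hA' b hbT hba
      obtain ⟨r, hr, hra, hlt2⟩ := hB' e he hec
      have : r = b := huniq r hr hra
      subst this
      exact CL' r hbT hba e he hec hlt hlt2
    by_cases hT2c : T2.card = 2
    · -- two columns
      obtain ⟨x, y, hxy, hT2eq⟩ := Finset.card_eq_two.mp hT2c
      have hmem : ∀ d ∈ T2, d = x ∨ d = y := by
        intro d hd; rw [hT2eq] at hd; simpa using hd
      have hd : ∃ d ∈ T2, d ≠ c ∧ ∀ e ∈ T2, e ≠ c → e = d := by
        rcases hmem c hc with rfl | rfl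
        · refine ⟨y, by rw [hT2eq]; simp, Ne.symm hxy, ?_⟩
          intro e he hec; rcases hmem e he with rfl | rfl
          · exact absurd rfl hec
          · rfl
        · refine ⟨x, by rw [hT2eq]; simp, hxy, ?_⟩
          intro e he hec; rcases hmem e he with rfl | rfl
          · rfl
          · exact absurd rfl hec
      obtain ⟨d, hdT, hdc, huniq⟩ := hd
      obtain ⟨r, hr, hra, hlt1⟩ := hB' d hdT hdc
      obtain ⟨e, he, hec, hlt2⟩ := hA' r hr hra
      have : e = d := huniq e he hec
      subst this
      exact CL' r hr hra e he hec hlt2 hlt1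
    -- main case: both at least 3
    have hT1c3 : 3 ≤ T1.card := by omega
    have hT2c3 : 3 ≤ T2.card := by omega
    have hne : ((T1.erase a) ×ˢ T2).Nonempty := by
      refine Finset.Nonempty.product ?_ ⟨c, hc⟩
      rw [← Finset.card_pos, Finset.card_erase_of_mem ha]; omega
    obtain ⟨⟨p, q⟩, hpqmem, hmaxpq⟩ := Finset.exists_max_image _ (fun z => u1 z) hne
    rw [Finset.mem_product] at hpqmem
    obtain ⟨hpmem, hq⟩ := hpqmem
    have hpa : p ≠ a := (Finset.mem_erase.mp hpmem).1
    have hp : p ∈ T1 := (Finset.mem_erase.mp hpmem).2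
    -- Step A: apply IH to (T1.erase p, T2) to find a column d0 where p beats c
    have hpd0 : ∃ d0 ∈ T2, d0 ≠ c ∧ u1 (p, c) < u1 (p, d0) := by
      have hstepA := ih (T1.erase p) T2
        (by rw [Finset.card_erase_of_mem hp]; omega)
        (by rw [Finset.card_erase_of_mem hp]; omega) hT2
        a (Finset.mem_erase.mpr ⟨Ne.symm hpa, ha⟩) c hc
        (fun r hr d hd => hmax r (Finset.mem_of_mem_erase hr) d hd)
      rcases hstepA with ⟨b, hb, hba, hdom⟩ | ⟨d0, hd0, hd0c, hcoldom⟩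
      · obtain ⟨e, he, _, hlt⟩ := hA' b (Finset.mem_of_mem_erase hb) hba
        exact absurd (hdom e he) (not_lt.mpr (le_of_lt hlt))
      · obtain ⟨r', hr', hr'a, hlt⟩ := hB' d0 hd0 hd0c
        by_cases hr'p : r' = p
        · subst hr'p; exact ⟨d0, hd0, hd0c, hlt⟩
        · exact absurd (hcoldom r' (Finset.mem_erase.mpr ⟨hr'p, hr'⟩))
            (not_lt.mpr (le_of_lt hlt))
    obtain ⟨d0, hd0, hd0c, hpd0lt⟩ := hpd0
    have hpcq : u1 (p, c) < u1 (p, q) :=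
      lt_of_lt_of_le hpd0lt (hmaxpq (p, d0) (Finset.mem_product.mpr ⟨hpmem, hd0⟩))
    have hqc : q ≠ c := by rintro rfl; exact lt_irrefl _ hpcq
    -- Step B: u1 (p, q) < u1 (a, q)
    have hpqa : u1 (p, q) < u1 (a, q) := by
      rcases lt_or_gt_of_ne (hstrict1 hpa : u1 (p, q) ≠ u1 (a, q)) with h | h
      · exact h
      · exact absurd (CL' p hp hpa q hq hqc h hpcq) id
    -- Step C: apply IH to (T1, T2.erase q)
    have hstepC := ih T1 (T2.erase q)
      (by rw [Finset.card_erase_of_mem hq]; omega) hT1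
      (by rw [Finset.card_erase_of_mem hq]; omega)
      a ha c (Finset.mem_erase.mpr ⟨Ne.symm hqc, hc⟩)
      (fun r hr d hd => hmax r hr d (Finset.mem_of_mem_erase hd))
    rcases hstepC with ⟨b, hb, hba, hdom⟩ | ⟨d, hd, hdc, hcoldom⟩
    · obtain ⟨e, he, hec, hlt⟩ := hA' b hb hba
      by_cases heq : e = q
      · subst heq
        have hbq : u1 (b, e) ≤ u1 (p, e) :=
          hmaxpq (b, e) (Finset.mem_product.mpr ⟨Finset.mem_erase.mpr ⟨hba, hb⟩, he⟩)
        linarith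
      · exact absurd (hdom e (Finset.mem_erase.mpr ⟨heq, he⟩)) (not_lt.mpr (le_of_lt hlt))
    · obtain ⟨r, hr, _, hlt⟩ := hB' d (Finset.mem_of_mem_erase hd) hdc
      exact absurd (hcoldom r hr) (not_lt.mpr (le_of_lt hlt))

end ShapleyAux

/-- Shapley's theorem: if every 2×2 subgame of a strict two-player zero-sum finite game
has a pure Nash equilibrium (within that subgame), then the game is dominance-solvable. -/
theorem zero_sum_dominance_solvable_of_2x2_pne {A B : Type*}
    [Fintype A] [Fintype B] [DecidableEq A] [DecidableEq B] [Nonempty A] [Nonempty B]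
    (u1 u2 : A × B → ℝ) (hz : ZeroSum2 u1 u2) (hs : Strict2 u1 u2)
    (h2x2 : ∀ a b : A, ∀ c d : B, a ≠ b → c ≠ d →
      ∃ p : A × B, IsSubgamePNE2x2 u1 u2 a b c d p) :
    DominanceSolvable u1 u2 := by
  have hstrict1 : ∀ {b b' : A} {e : B}, b ≠ b' → u1 (b, e) ≠ u1 (b', e) :=
    fun h => hs.1 _ _ ⟨h, rfl⟩
  have key : ∀ n : ℕ, ∀ T1 : Finset A, ∀ T2 : Finset B, T1.card + T2.card ≤ n →
      T1.Nonempty → T2.Nonempty →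
      ∃ T : Finset A × Finset B,
        Relation.ReflTransGen (DeletionStep u1 u2) (T1, T2) T ∧
          T.1.card = 1 ∧ T.2.card = 1 := by
    intro n
    induction n with
    | zero =>
      intro T1 T2 hcard h1 h2
      have := Finset.card_pos.mpr h1; have := Finset.card_pos.mpr h2; omega
    | succ n ih =>
      intro T1 T2 hcard h1 h2
      by_cases hc1 : 2 ≤ T1.card
      · by_cases hc2 : 2 ≤ T2.card
        · -- both at least 2: use claimC with a max cell
          obtain ⟨⟨a, c⟩, hacmem, hmax⟩ :=
            Finset.exists_max_image (T1 ×ˢ T2) (fun z => u1 z) (h1.product h2)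
          rw [Finset.mem_product] at hacmem
          obtain ⟨ha, hc⟩ := hacmem
          have hmax' : ∀ r ∈ T1, ∀ d ∈ T2, u1 (r, d) ≤ u1 (a, c) :=
            fun r hr d hd => hmax (r, d) (Finset.mem_product.mpr ⟨hr, hd⟩)
          rcases claimC u1 u2 hz hs h2x2 (T1.card + T2.card) T1 T2 le_rfl hc1 hc2
              a ha c hc hmax' with ⟨b, hb, hba, hdom⟩ | ⟨d, hd, hdc, hdom⟩
          · -- delete row b, dominated by a
            have hstep : DeletionStep u1 u2 (T1, T2) (T1.erase b, T2) :=
              Or.inl ⟨b, hb, ⟨a, ha, fun r hr => hdom r hr⟩, rfl, rfl⟩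
            obtain ⟨T, hT, hT1, hT2⟩ := ih (T1.erase b) T2
              (by rw [Finset.card_erase_of_mem hb]; omega)
              ⟨a, Finset.mem_erase.mpr ⟨Ne.symm hba, ha⟩⟩ h2
            exact ⟨T, Relation.ReflTransGen.head hstep hT, hT1, hT2⟩
          · -- delete column c, dominated (for player 2) by d
            have hstep : DeletionStep u1 u2 (T1, T2) (T1, T2.erase c) := by
              refine Or.inr ⟨c, hc, ⟨d, hd, fun r hr => ?_⟩, rfl, rfl⟩
              have h1 := hz (r, c); have h2 := hz (r, d)
              have := hdom r hr
              linarith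
            obtain ⟨T, hT, hT1, hT2⟩ := ih T1 (T2.erase c)
              (by rw [Finset.card_erase_of_mem hc]; omega)
              h1 ⟨d, Finset.mem_erase.mpr ⟨hdc, hd⟩⟩
            exact ⟨T, Relation.ReflTransGen.head hstep hT, hT1, hT2⟩
        · -- T2 is a singleton
          have hT2card : T2.card = 1 := by
            have := Finset.card_pos.mpr h2; omega
          obtain ⟨c, hT2eq⟩ := Finset.card_eq_one.mp hT2card
          subst hT2eq
          obtain ⟨a, ha, hmax⟩ :=
            Finset.exists_max_image T1 (fun r => u1 (r, c)) h1
          obtain ⟨b, hb, hba⟩ := Finset.exists_mem_ne hc1 a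
          have hdom : ∀ r ∈ ({c} : Finset B), u1 (b, r) < u1 (a, r) := by
            intro r hr
            rw [Finset.mem_singleton] at hr; subst hr
            exact lt_of_le_of_ne (hmax b hb) (hstrict1 hba)
          have hstep : DeletionStep u1 u2 (T1, ({c} : Finset B)) (T1.erase b, {c}) :=
            Or.inl ⟨b, hb, ⟨a, ha, hdom⟩, rfl, rfl⟩
          obtain ⟨T, hT, hT1, hT2⟩ := ih (T1.erase b) {c}
            (by rw [Finset.card_erase_of_mem hb]; simp at hcard ⊢; omega)
            ⟨a, Finset.mem_erase.mpr ⟨Ne.symm hba, ha⟩⟩ ⟨c, Finset.mem_singleton_self c⟩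
          exact ⟨T, Relation.ReflTransGen.head hstep hT, hT1, hT2⟩
      · have hT1card : T1.card = 1 := by
          have := Finset.card_pos.mpr h1; omega
        obtain ⟨a, hT1eq⟩ := Finset.card_eq_one.mp hT1card
        subst hT1eq
        by_cases hc2 : 2 ≤ T2.card
        · -- T1 singleton, T2 at least 2: delete a dominated column
          obtain ⟨c, hcm, hmax⟩ :=
            Finset.exists_max_image T2 (fun d => u2 (a, d)) h2
          obtain ⟨d, hd, hdc⟩ := Finset.exists_mem_ne hc2 c
          have hdom : ∀ r ∈ ({a} : Finset A), u2 (r, d) < u2 (r, c) := by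
            intro r hr
            rw [Finset.mem_singleton] at hr; subst hr
            refine lt_of_le_of_ne (hmax d hd) ?_
            exact hs.2 (r, d) (r, c) ⟨rfl, hdc⟩
          have hstep : DeletionStep u1 u2 (({a} : Finset A), T2) ({a}, T2.erase d) :=
            Or.inr ⟨d, hd, ⟨c, hcm, hdom⟩, rfl, rfl⟩
          obtain ⟨T, hT, hT1, hT2⟩ := ih {a} (T2.erase d)
            (by rw [Finset.card_erase_of_mem hd]; simp at hcard ⊢; omega)
            ⟨a, Finset.mem_singleton_self a⟩ ⟨c, Finset.mem_erase.mpr ⟨Ne.symm hdc, hcm⟩⟩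
          exact ⟨T, Relation.ReflTransGen.head hstep hT, hT1, hT2⟩
        · -- both singletons: done
          have hT2card : T2.card = 1 := by
            have := Finset.card_pos.mpr h2; omega
          exact ⟨({a}, T2), Relation.ReflTransGen.refl, Finset.card_singleton a, hT2card⟩
  obtain ⟨T, hT, h1, h2⟩ := key ((Finset.univ : Finset A).card + (Finset.univ : Finset B).card)
    Finset.univ Finset.univ le_rfl Finset.univ_nonempty Finset.univ_nonempty
  exact ⟨T, hT, h1, h2⟩
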